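/- Let F : C → B and G : D → B be Galois coverings of k-categories, and let (H,J) be a morphism from F to G. Then the k-linear functor H : C → D is itself a Galois covering of D. -/

import Mathlib

open CategoryTheory

universe w v u

section CoveringDefs

variable (k : Type w) [CommRing k]

/-- A functor between `k`-linear categories is `k`-linear:
it is additive and commutes with the scalar action on morphisms. -/
def IsLinearFunctor {C : Type u} [Category.{v} C] [Preadditive C] [CategoryTheory.Linear k C]
    {B : Type u} [Category.{v} B] [Preadditive B] [CategoryTheory.Linear k B]
    (F : C ⥤ B) : Prop :=
  (∀ (x y : C) (f g : x ⟶ y), F.map (f + g) = F.map f + F.map g) ∧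
  (∀ (x y : C) (r : k) (f : x ⟶ y), F.map (r • f) = r • F.map f)

variable {C : Type u} [Category.{v} C] [Preadditive C] [CategoryTheory.Linear k C]
variable {B : Type u} [Category.{v} B] [Preadditive B] [CategoryTheory.Linear k B]

/-- The canonical map `⊕_{y ∈ F⁻¹(c)} C(x,y) →+ B(F(x),c)` induced by `F`
on the source star. -/
noncomputable def starOutHom (F : C ⥤ B) (hF : IsLinearFunctor k F) (x : C) (c : B) :
    (DirectSum {y : C // F.obj y = c} (fun y => (x ⟶ y.1))) →+ (F.obj x ⟶ c) := by
  classical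
  exact DirectSum.toAddMonoid fun y =>
    AddMonoidHom.mk' (fun f => F.map f ≫ eqToHom y.2)
      (fun f g => by (try simp only []); rw [hF.1 _ _ f g, Preadditive.add_comp]; all_goals rfl)

/-- The canonical map `⊕_{y ∈ F⁻¹(c)} C(y,x) →+ B(c,F(x))` induced by `F`
on the target star. -/
noncomputable def starInHom (F : C ⥤ B) (hF : IsLinearFunctor k F) (x : C) (c : B) :
    (DirectSum {y : C // F.obj y = c} (fun y => (y.1 ⟶ x))) →+ (c ⟶ F.obj x) := by
  classical
  exact DirectSum.toAddMonoid fun y =>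
    AddMonoidHom.mk' (fun f => eqToHom y.2.symm ≫ F.map f)
      (fun f g => by (try simp only []); rw [hF.1 _ _ f g, Preadditive.comp_add]; all_goals rfl)

/-- `F : C ⥤ B` is a covering of `k`-categories: it is a `k`-linear functor,
surjective on objects, inducing bijections on all source and target stars. -/
def IsCovering (F : C ⥤ B) : Prop :=
  ∃ hF : IsLinearFunctor k F,
    Function.Surjective F.obj ∧
    (∀ (x : C) (c : B), Function.Bijective (starOutHom k F hF x c)) ∧
    (∀ (x : C) (c : B), Function.Bijective (starInHom k F hF x c))

end CoveringDefs

/-- A `k`-category is connected if the equivalence relation generated by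
"there is a nonzero morphism from `x` to `y`" relates any two objects. -/
def IsConnectedKCat (C : Type u) [Category.{v} C] [Preadditive C] : Prop :=
  ∀ x y : C, Relation.EqvGen (fun a b : C => ∃ f : a ⟶ b, f ≠ 0) x y

section GaloisDefs

variable (k : Type w) [CommRing k]
variable {C : Type u} [Category.{v} C] [Preadditive C] [CategoryTheory.Linear k C]
variable {B : Type u} [Category.{v} B] [Preadditive B] [CategoryTheory.Linear k B]
variable {D : Type u} [Category.{v} D] [Preadditive D] [CategoryTheory.Linear k D]

/-- `H` belongs to `Aut₁ F`: it is an invertible `k`-linear endofunctor with `F ∘ H = F`. -/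
def MemAut1 (F : C ⥤ B) (H : C ⥤ C) : Prop :=
  IsLinearFunctor k H ∧
  (∃ Hinv : C ⥤ C, H ⋙ Hinv = 𝟭 C ∧ Hinv ⋙ H = 𝟭 C) ∧
  H ⋙ F = F

/-- A covering is Galois if its source is connected and `Aut₁ F` acts transitively
on some fibre. -/
def IsGaloisCovering (F : C ⥤ B) : Prop :=
  IsCovering k F ∧ IsConnectedKCat C ∧
  ∃ b₀ : B, ∀ x y : C, F.obj x = b₀ → F.obj y = b₀ →
    ∃ H : C ⥤ C, MemAut1 k F H ∧ H.obj x = y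

/-- A morphism `(H, J)` of coverings from `F : C ⥤ B` to `G : D ⥤ B`:
`H` and `J` are `k`-linear, `J` is an isomorphism which is the identity on objects,
and `G ∘ H = J ∘ F`. -/
def IsCoveringMorphism (F : C ⥤ B) (G : D ⥤ B) (H : C ⥤ D) (J : B ⥤ B) : Prop :=
  IsLinearFunctor k H ∧ IsLinearFunctor k J ∧
  (∃ Jinv : B ⥤ B, J ⋙ Jinv = 𝟭 B ∧ Jinv ⋙ J = 𝟭 B) ∧
  (∀ b : B, J.obj b = b) ∧
  H ⋙ G = F ⋙ J

end GaloisDefs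

/-- A universal covering: a Galois covering `U` such that for every Galois covering
`F : C ⥤ B` and every pair of objects `u₀`, `c₀` above the same object of `B`,
there is a unique `k`-linear functor `H` with `F ∘ H = U` and `H u₀ = c₀`. -/
def IsUniversalCovering (k : Type w) [CommRing k]
    {U' : Type u} [Category.{v} U'] [Preadditive U'] [CategoryTheory.Linear k U']
    {B : Type u} [Category.{v} B] [Preadditive B] [CategoryTheory.Linear k B]
    (U : U' ⥤ B) : Prop :=
  IsGaloisCovering k U ∧
  ∀ (C : Type u) [Category.{v} C] [Preadditive C] [CategoryTheory.Linear k C]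
    (F : C ⥤ B), IsGaloisCovering k F →
    ∀ (u₀ : U') (c₀ : C), U.obj u₀ = F.obj c₀ →
      ∃! H : U' ⥤ C, IsLinearFunctor k H ∧ H ⋙ F = U ∧ H.obj u₀ = c₀

/-- Given a functor `F : C ⥤ B`, a choice `x` of objects of `C` above each object of `B`,
and an endofunctor `H` of `C`, the subset `Z_H(c,b) = F(C(x_b, H x_c))` of `B(b,c)`. -/
def gradeSet {C : Type u} [Category.{v} C] {B : Type u} [Category.{v} B]
    (F : C ⥤ B) (x : B → C) (H : C ⥤ C) (b c : B) : Set (b ⟶ c) :=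
  {g | ∃ (h₁ : b = F.obj (x b)) (h₂ : F.obj (H.obj (x c)) = c)
        (f : x b ⟶ H.obj (x c)), g = eqToHom h₁ ≫ F.map f ≫ eqToHom h₂}

/-- The homogeneous component `Z_H(c,b)` as a `k`-submodule of `B(b,c)`. -/
noncomputable def gradeSubmodule (k : Type w) [CommRing k]
    {C : Type u} [Category.{v} C]
    {B : Type u} [Category.{v} B] [Preadditive B] [CategoryTheory.Linear k B]
    (F : C ⥤ B) (x : B → C) (H : C ⥤ C) (b c : B) : Submodule k (b ⟶ c) :=
  Submodule.span k (gradeSet F x H b c)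

namespace GaloisProofHelpers

open DirectSum
open scoped Classical

variable {k : Type w} [CommRing k]
variable {C : Type u} [Category.{v} C] [Preadditive C] [CategoryTheory.Linear k C]
variable {B : Type u} [Category.{v} B] [Preadditive B] [CategoryTheory.Linear k B]
variable {D : Type u} [Category.{v} D] [Preadditive D] [CategoryTheory.Linear k D]

/-- conjugation by eqToHoms as an additive map -/
def conjHom {a b a' b' : B} (h : a' = a) (h' : b = b') :
    (a ⟶ b) →+ (a' ⟶ b') :=
  AddMonoidHom.mk' (fun u => eqToHom h ≫ u ≫ eqToHom h') (by
    intro u v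
    simp [Preadditive.add_comp, Preadditive.comp_add])

@[simp] lemma conjHom_apply {a b a' b' : B} (h : a' = a) (h' : b = b') (u : a ⟶ b) :
    conjHom h h' u = eqToHom h ≫ u ≫ eqToHom h' := rfl

lemma conj_injective {a b a' b' : B} (h : a' = a) (h' : b = b') {u v : a ⟶ b}
    (huv : eqToHom h ≫ u ≫ eqToHom h' = eqToHom h ≫ v ≫ eqToHom h') : u = v :=
  (cancel_mono (eqToHom h')).1 ((cancel_epi (eqToHom h)).1 huv)

/-- `F.map` as an additive monoid hom -/
def mapHom (F : C ⥤ B) (hF : IsLinearFunctor k F) (x y : C) :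
    (x ⟶ y) →+ (F.obj x ⟶ F.obj y) :=
  AddMonoidHom.mk' F.map (hF.1 x y)

@[simp] lemma mapHom_apply (F : C ⥤ B) (hF : IsLinearFunctor k F) {x y : C} (f : x ⟶ y) :
    mapHom (k := k) F hF x y f = F.map f := rfl

lemma lin_map_zero (F : C ⥤ B) (hF : IsLinearFunctor k F) (x y : C) :
    F.map (0 : x ⟶ y) = 0 := by
  have h := hF.2 x y 0 0
  simpa using h

lemma starOut_of (F : C ⥤ B) (hF : IsLinearFunctor k F) (x : C) (c : B)
    (y : {y : C // F.obj y = c}) (f : x ⟶ y.1) :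
    starOutHom k F hF x c (DirectSum.of _ y f) = F.map f ≫ eqToHom y.2 := by
  classical
  simp [starOutHom, DirectSum.toAddMonoid_of]

lemma starIn_of (F : C ⥤ B) (hF : IsLinearFunctor k F) (x : C) (c : B)
    (y : {y : C // F.obj y = c}) (f : y.1 ⟶ x) :
    starInHom k F hF x c (DirectSum.of (fun y : {y : C // F.obj y = c} => (y.1 ⟶ x)) y f)
      = eqToHom y.2.symm ≫ F.map f := by
  classical
  simp [starInHom, DirectSum.toAddMonoid_of]

end GaloisProofHelpers

section PlainCat
variable {E : Type u} [Category.{v} E] {E' : Type u} [Category.{v} E']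

lemma GaloisProofHelpers.conj_inj {a b a' b' : E} (h : a' = a) (h' : b = b') {u v : a ⟶ b}
    (huv : eqToHom h ≫ u ≫ eqToHom h' = eqToHom h ≫ v ≫ eqToHom h') : u = v :=
  (cancel_mono (eqToHom h')).1 ((cancel_epi (eqToHom h)).1 huv)

lemma GaloisProofHelpers.retract_map_conj {P : E ⥤ E'} {Q : E' ⥤ E} (h : P ⋙ Q = 𝟭 E)
    {x y : E} (f : x ⟶ y) :
    Q.map (P.map f) = eqToHom (Functor.congr_obj h x) ≫ f ≫
      eqToHom (Functor.congr_obj h y).symm := by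
  have hf := Functor.congr_hom h f
  simpa using hf

lemma GaloisProofHelpers.retract_map_injective {P : E ⥤ E'} {Q : E' ⥤ E} (h : P ⋙ Q = 𝟭 E)
    {x y : E} : Function.Injective (P.map : (x ⟶ y) → (P.obj x ⟶ P.obj y)) := by
  intro f g hfg
  have hf := GaloisProofHelpers.retract_map_conj h f
  have hg := GaloisProofHelpers.retract_map_conj h g
  rw [hfg, hg] at hf
  exact (GaloisProofHelpers.conj_inj _ _ hf.symm)

lemma GaloisProofHelpers.inv_comp_eq {σ σinv : E ⥤ E} {E'' : Type u} [Category.{v} E'']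
    {F : E ⥤ E''} (h2 : σinv ⋙ σ = 𝟭 E) (hσF : σ ⋙ F = F) :
    σinv ⋙ F = F := by
  conv_lhs => rw [← hσF]
  rw [← Functor.assoc, h2, Functor.id_comp]

end PlainCat

namespace GaloisProofHelpers

set_option linter.unusedSectionVars false

variable {k : Type w} [CommRing k]
variable {C : Type u} [Category.{v} C] [Preadditive C] [CategoryTheory.Linear k C]
variable {B : Type u} [Category.{v} B] [Preadditive B] [CategoryTheory.Linear k B]

lemma inv_isLinear {J : C ⥤ B} {Jinv : B ⥤ C} (h1 : J ⋙ Jinv = 𝟭 C) (h2 : Jinv ⋙ J = 𝟭 B)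
    (hJ : IsLinearFunctor k J) : IsLinearFunctor k Jinv := by
  constructor
  · intro x y f g
    apply retract_map_injective h1
    rw [hJ.1]
    rw [retract_map_conj h2 (f + g), retract_map_conj h2 f, retract_map_conj h2 g]
    simp [Preadditive.add_comp, Preadditive.comp_add]
  · intro x y r f
    apply retract_map_injective h1
    rw [hJ.2]
    rw [retract_map_conj h2 (r • f), retract_map_conj h2 f]
    simp [CategoryTheory.Linear.smul_comp, CategoryTheory.Linear.comp_smul]

variable {F : C ⥤ B}

lemma cov_map_injective (hlin : IsLinearFunctor k F)
    (hout : ∀ x c, Function.Bijective (starOutHom k F hlin x c))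
    {x y : C} {f g : x ⟶ y} (h : F.map f = F.map g) : f = g := by
  classical
  have h1 : starOutHom k F hlin x (F.obj y)
        (DirectSum.of (fun y' : {y' : C // F.obj y' = F.obj y} => (x ⟶ y'.1)) ⟨y, rfl⟩ f)
      = starOutHom k F hlin x (F.obj y)
        (DirectSum.of (fun y' : {y' : C // F.obj y' = F.obj y} => (x ⟶ y'.1)) ⟨y, rfl⟩ g) := by
    rw [starOut_of, starOut_of]
    simp [h]
  have h2 := (hout x (F.obj y)).1 h1
  have h3 := congrArg (fun a => a (⟨y, rfl⟩ : {y' : C // F.obj y' = F.obj y})) h2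
  simpa [DirectSum.of_eq_same] using h3

lemma cov_map_ne_zero (hlin : IsLinearFunctor k F)
    (hout : ∀ x c, Function.Bijective (starOutHom k F hlin x c))
    {x y : C} {f : x ⟶ y} (hf : f ≠ 0) : F.map f ≠ 0 := by
  intro h0
  apply hf
  apply cov_map_injective hlin hout (f := f) (g := 0)
  rw [h0, lin_map_zero F hlin]

end GaloisProofHelpers

namespace GaloisProofHelpers

set_option linter.unusedSectionVars false

open DirectSum
open scoped Classical

variable {k : Type w} [CommRing k]
variable {C : Type u} [Category.{v} C] [Preadditive C] [CategoryTheory.Linear k C]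
variable {B : Type u} [Category.{v} B] [Preadditive B] [CategoryTheory.Linear k B]
variable {F : C ⥤ B}

lemma good_propagate_out (hlin : IsLinearFunctor k F)
    (hout : ∀ x c, Function.Bijective (starOutHom k F hlin x c))
    (hin : ∀ x c, Function.Bijective (starInHom k F hlin x c))
    {x z : C} (f : x ⟶ z) (hf : f ≠ 0)
    (hx : ∀ w : C, F.obj w = F.obj x → ∃ σ : C ⥤ C, MemAut1 k F σ ∧ σ.obj x = w) :
    ∀ w : C, F.obj w = F.obj z → ∃ σ : C ⥤ C, MemAut1 k F σ ∧ σ.obj z = w := by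
  classical
  intro w hw
  -- choices
  have hx' : ∀ p : {y : C // F.obj y = F.obj x}, ∃ σ : C ⥤ C, MemAut1 k F σ ∧ σ.obj x = p.1 :=
    fun p => hx p.1 p.2
  choose σ hmem hobj using hx'
  choose σinv hinv1 hinv2 using fun p => (hmem p).2.1
  have hσF : ∀ p, σ p ⋙ F = F := fun p => (hmem p).2.2
  have hσinvF : ∀ p, σinv p ⋙ F = F := fun p => inv_comp_eq (hinv2 p) (hσF p)
  have hlinσinv : ∀ p, IsLinearFunctor k (σinv p) :=
    fun p => inv_isLinear (hinv1 p) (hinv2 p) (hmem p).1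
  have e1 : ∀ p, (σinv p).obj p.1 = x := by
    intro p
    have := Functor.congr_obj (hinv1 p) x
    simpa [hobj p] using this
  have e2 : ∀ p, F.obj ((σinv p).obj w) = F.obj z := by
    intro p
    have := Functor.congr_obj (hσinvF p) w
    simpa [hw] using this
  -- decompose u along starIn at w
  set u : F.obj x ⟶ F.obj w := F.map f ≫ eqToHom hw.symm with hu
  obtain ⟨a, ha⟩ := (hin w (F.obj x)).2 u
  -- the transported element
  set Φ : (DirectSum {y : C // F.obj y = F.obj x} (fun p => (p.1 ⟶ w))) →+
      (DirectSum {q : C // F.obj q = F.obj z} (fun q => (x ⟶ q.1))) :=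
    DirectSum.toAddMonoid (fun p =>
      (DirectSum.of (fun q : {q : C // F.obj q = F.obj z} => (x ⟶ q.1)) ⟨(σinv p).obj w, e2 p⟩).comp
        ((conjHom (e1 p).symm rfl).comp (mapHom (σinv p) (hlinσinv p) p.1 w))) with hΦ
  have key : ∀ b : DirectSum {y : C // F.obj y = F.obj x} (fun p => (p.1 ⟶ w)),
      starOutHom k F hlin x (F.obj z) (Φ b)
        = starInHom k F hlin w (F.obj x) b ≫ eqToHom hw := by
    intro b
    induction b using DirectSum.induction_on with
    | zero => simp
    | of p g =>
      rw [hΦ, DirectSum.toAddMonoid_of]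
      simp only [AddMonoidHom.comp_apply, mapHom_apply, conjHom_apply]
      rw [starOut_of, starIn_of]
      have hcg := Functor.congr_hom (hσinvF p) g
      simp only [Functor.comp_map] at hcg
      simp [hcg, eqToHom_map]
    | add b1 b2 ih1 ih2 =>
      rw [map_add, map_add, ih1, ih2, map_add]
      simp [Preadditive.add_comp]
  have keyf : starOutHom k F hlin x (F.obj z) (Φ a)
      = starOutHom k F hlin x (F.obj z)
        (DirectSum.of (fun q : {q : C // F.obj q = F.obj z} => (x ⟶ q.1)) ⟨z, rfl⟩ f) := by
    rw [key a, ha, starOut_of]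
    simp [hu]
  have heq := (hout x (F.obj z)).1 keyf
  -- extract the support
  have hexists : ∃ p : {y : C // F.obj y = F.obj x}, (σinv p).obj w = z := by
    by_contra hno
    push_neg at hno
    have hzero : ∀ b : DirectSum {y : C // F.obj y = F.obj x} (fun p => (p.1 ⟶ w)),
        (Φ b) (⟨z, rfl⟩ : {q : C // F.obj q = F.obj z}) = 0 := by
      intro b
      induction b using DirectSum.induction_on with
      | zero => simp [DirectSum.zero_apply]
      | of p g =>
        rw [hΦ, DirectSum.toAddMonoid_of]
        simp only [AddMonoidHom.comp_apply]
        apply DirectSum.of_eq_of_ne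
        intro hq
        exact hno p (congrArg Subtype.val hq).symm
      | add b1 b2 ih1 ih2 =>
        rw [map_add, DirectSum.add_apply, ih1, ih2, add_zero]
    have h1 := hzero a
    rw [heq, DirectSum.of_eq_same] at h1
    exact hf h1
  obtain ⟨p, hp⟩ := hexists
  refine ⟨σ p, hmem p, ?_⟩
  have := Functor.congr_obj (hinv2 p) w
  simp only [Functor.comp_obj, Functor.id_obj] at this
  rw [← hp]
  exact this

end GaloisProofHelpers

namespace GaloisProofHelpers

set_option linter.unusedSectionVars false

open DirectSum
open scoped Classical

variable {k : Type w} [CommRing k]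
variable {C : Type u} [Category.{v} C] [Preadditive C] [CategoryTheory.Linear k C]
variable {B : Type u} [Category.{v} B] [Preadditive B] [CategoryTheory.Linear k B]
variable {F : C ⥤ B}

lemma good_propagate_in (hlin : IsLinearFunctor k F)
    (hout : ∀ x c, Function.Bijective (starOutHom k F hlin x c))
    (hin : ∀ x c, Function.Bijective (starInHom k F hlin x c))
    {x z : C} (f : z ⟶ x) (hf : f ≠ 0)
    (hx : ∀ w : C, F.obj w = F.obj x → ∃ σ : C ⥤ C, MemAut1 k F σ ∧ σ.obj x = w) :
    ∀ w : C, F.obj w = F.obj z → ∃ σ : C ⥤ C, MemAut1 k F σ ∧ σ.obj z = w := by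
  classical
  intro w hw
  have hx' : ∀ p : {y : C // F.obj y = F.obj x}, ∃ σ : C ⥤ C, MemAut1 k F σ ∧ σ.obj x = p.1 :=
    fun p => hx p.1 p.2
  choose σ hmem hobj using hx'
  choose σinv hinv1 hinv2 using fun p => (hmem p).2.1
  have hσF : ∀ p, σ p ⋙ F = F := fun p => (hmem p).2.2
  have hσinvF : ∀ p, σinv p ⋙ F = F := fun p => inv_comp_eq (hinv2 p) (hσF p)
  have hlinσinv : ∀ p, IsLinearFunctor k (σinv p) :=
    fun p => inv_isLinear (hinv1 p) (hinv2 p) (hmem p).1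
  have e1 : ∀ p, (σinv p).obj p.1 = x := by
    intro p
    have := Functor.congr_obj (hinv1 p) x
    simpa [hobj p] using this
  have e2 : ∀ p, F.obj ((σinv p).obj w) = F.obj z := by
    intro p
    have := Functor.congr_obj (hσinvF p) w
    simpa [hw] using this
  set u : F.obj w ⟶ F.obj x := eqToHom hw ≫ F.map f with hu
  obtain ⟨a, ha⟩ := (hout w (F.obj x)).2 u
  set Φ : (DirectSum {y : C // F.obj y = F.obj x} (fun p => (w ⟶ p.1))) →+
      (DirectSum {q : C // F.obj q = F.obj z} (fun q => (q.1 ⟶ x))) :=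
    DirectSum.toAddMonoid (fun p =>
      (DirectSum.of (fun q : {q : C // F.obj q = F.obj z} => (q.1 ⟶ x)) ⟨(σinv p).obj w, e2 p⟩).comp
        ((conjHom rfl (e1 p)).comp (mapHom (σinv p) (hlinσinv p) w p.1))) with hΦ
  have key : ∀ b : DirectSum {y : C // F.obj y = F.obj x} (fun p => (w ⟶ p.1)),
      starInHom k F hlin x (F.obj z) (Φ b)
        = eqToHom hw.symm ≫ starOutHom k F hlin w (F.obj x) b := by
    intro b
    induction b using DirectSum.induction_on with
    | zero => simp
    | of p g =>
      rw [hΦ, DirectSum.toAddMonoid_of]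
      simp only [AddMonoidHom.comp_apply, mapHom_apply, conjHom_apply]
      rw [starIn_of, starOut_of]
      have hcg := Functor.congr_hom (hσinvF p) g
      simp only [Functor.comp_map] at hcg
      simp [hcg, eqToHom_map]
    | add b1 b2 ih1 ih2 =>
      rw [map_add, map_add, ih1, ih2, map_add]
      simp [Preadditive.comp_add]
  have keyf : starInHom k F hlin x (F.obj z) (Φ a)
      = starInHom k F hlin x (F.obj z)
        (DirectSum.of (fun q : {q : C // F.obj q = F.obj z} => (q.1 ⟶ x)) ⟨z, rfl⟩ f) := by
    rw [key a, ha, starIn_of]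
    simp [hu]
  have heq := (hin x (F.obj z)).1 keyf
  have hexists : ∃ p : {y : C // F.obj y = F.obj x}, (σinv p).obj w = z := by
    by_contra hno
    push_neg at hno
    have hzero : ∀ b : DirectSum {y : C // F.obj y = F.obj x} (fun p => (w ⟶ p.1)),
        (Φ b) (⟨z, rfl⟩ : {q : C // F.obj q = F.obj z}) = 0 := by
      intro b
      induction b using DirectSum.induction_on with
      | zero => simp [DirectSum.zero_apply]
      | of p g =>
        rw [hΦ, DirectSum.toAddMonoid_of]
        simp only [AddMonoidHom.comp_apply]
        apply DirectSum.of_eq_of_ne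
        intro hq
        exact hno p (congrArg Subtype.val hq).symm
      | add b1 b2 ih1 ih2 =>
        rw [map_add, DirectSum.add_apply, ih1, ih2, add_zero]
    have h1 := hzero a
    rw [heq, DirectSum.of_eq_same] at h1
    exact hf h1
  obtain ⟨p, hp⟩ := hexists
  refine ⟨σ p, hmem p, ?_⟩
  have := Functor.congr_obj (hinv2 p) w
  simp only [Functor.comp_obj, Functor.id_obj] at this
  rw [← hp]
  exact this

/-- In a Galois covering, `Aut₁ F` acts transitively on every fibre. -/
lemma galois_transitive {F : C ⥤ B} (hgal : IsGaloisCovering k F)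
    {x y : C} (hxy : F.obj x = F.obj y) :
    ∃ σ : C ⥤ C, MemAut1 k F σ ∧ σ.obj x = y := by
  obtain ⟨⟨hlin, hsurj, hout, hin⟩, hconn, b₀, htrans⟩ := hgal
  obtain ⟨x₀, hx₀⟩ := hsurj b₀
  have base : ∀ w, F.obj w = F.obj x₀ → ∃ σ, MemAut1 k F σ ∧ σ.obj x₀ = w := fun w hw =>
    htrans x₀ w hx₀ (by rw [hw, hx₀])
  have step : ∀ a b : C, Relation.EqvGen (fun p q : C => ∃ f : p ⟶ q, f ≠ 0) a b →
      ((∀ w, F.obj w = F.obj a → ∃ σ, MemAut1 k F σ ∧ σ.obj a = w) ↔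
       (∀ w, F.obj w = F.obj b → ∃ σ, MemAut1 k F σ ∧ σ.obj b = w)) := by
    intro a b h
    induction h with
    | rel p q hpq =>
      obtain ⟨f, hf⟩ := hpq
      exact ⟨fun hg => good_propagate_out hlin hout hin f hf hg,
             fun hg => good_propagate_in hlin hout hin f hf hg⟩
    | refl p => exact Iff.rfl
    | symm p q _ ih => exact ih.symm
    | trans p q r _ _ ih1 ih2 => exact ih1.trans ih2
  have goodx : ∀ w, F.obj w = F.obj x → ∃ σ, MemAut1 k F σ ∧ σ.obj x = w :=
    (step x₀ x (hconn x₀ x)).1 base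
  exact goodx y hxy.symm

end GaloisProofHelpers

namespace GaloisMain

set_option linter.unusedSectionVars false
set_option maxHeartbeats 1000000

open DirectSum GaloisProofHelpers
open scoped Classical

variable {k : Type w} [CommRing k]
variable {C : Type u} [Category.{v} C] [Preadditive C] [CategoryTheory.Linear k C]
variable {B : Type u} [Category.{v} B] [Preadditive B] [CategoryTheory.Linear k B]
variable {D : Type u} [Category.{v} D] [Preadditive D] [CategoryTheory.Linear k D]
variable {F : C ⥤ B} {G : D ⥤ B} {H : C ⥤ D} {J Jinv : B ⥤ B}

lemma H_obj_surjective
    (hcomm : H ⋙ G = F ⋙ J) (hJid : ∀ b, J.obj b = b)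
    (hJ1 : J ⋙ Jinv = 𝟭 B) (hJ2 : Jinv ⋙ J = 𝟭 B) (hJlin : IsLinearFunctor k J)
    (hHlin : IsLinearFunctor k H)
    (hFcov : IsCovering k F) (hGcov : IsCovering k G) (hDconn : IsConnectedKCat D) :
    Function.Surjective H.obj := by
  classical
  obtain ⟨hFlin, hFsurj, hFout, hFin⟩ := hFcov
  obtain ⟨hGlin, hGsurj, hGout, hGin⟩ := hGcov
  have hGH : ∀ x : C, G.obj (H.obj x) = F.obj x :=
    fun x => (Functor.congr_obj hcomm x).trans (hJid _)
  have hJinvid : ∀ b, Jinv.obj b = b := by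
    intro b
    have h := Functor.congr_obj hJ1 b
    simp only [Functor.comp_obj, Functor.id_obj] at h
    rw [hJid] at h
    exact h
  have hJinvlin : IsLinearFunctor k Jinv := inv_isLinear hJ1 hJ2 hJlin
  -- forward propagation
  have step_out : ∀ (d d' : D) (g : d ⟶ d'), g ≠ 0 →
      (∃ x, H.obj x = d) → (∃ x, H.obj x = d') := by
    rintro d d' g hg ⟨x, hx⟩
    have hGd : G.obj d = F.obj x := (congrArg G.obj hx).symm.trans (hGH x)
    have hA : F.obj x = Jinv.obj (G.obj d) := ((hJinvid _).trans hGd).symm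
    have hB : Jinv.obj (G.obj d') = G.obj d' := hJinvid _
    set u : F.obj x ⟶ G.obj d' := eqToHom hA ≫ Jinv.map (G.map g) ≫ eqToHom hB with hu
    have hune : u ≠ 0 := by
      intro h0
      apply hg
      apply cov_map_injective hGlin hGout (f := g) (g := 0)
      rw [lin_map_zero G hGlin]
      apply retract_map_injective hJ2
      rw [lin_map_zero Jinv hJinvlin]
      have hj : Jinv.map (G.map g) = eqToHom hA.symm ≫ u ≫ eqToHom hB.symm := by
        rw [hu]; simp
      rw [hj, h0]
      simp
    obtain ⟨a, ha⟩ := (hFout x (G.obj d')).2 u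
    set Ψ : (DirectSum {y : C // F.obj y = G.obj d'} (fun y => (x ⟶ y.1))) →+
        (DirectSum {e : D // G.obj e = G.obj d'} (fun e => (H.obj x ⟶ e.1))) :=
      DirectSum.toAddMonoid (fun y =>
        (DirectSum.of (fun e : {e : D // G.obj e = G.obj d'} => (H.obj x ⟶ e.1))
            ⟨H.obj y.1, (hGH y.1).trans y.2⟩).comp (mapHom H hHlin x y.1)) with hΨ
    have key : ∀ b : DirectSum {y : C // F.obj y = G.obj d'} (fun y => (x ⟶ y.1)),
        starOutHom k G hGlin (H.obj x) (G.obj d') (Ψ b)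
          = eqToHom (Functor.congr_obj hcomm x) ≫
              J.map (starOutHom k F hFlin x (G.obj d') b) ≫ eqToHom (hJid (G.obj d')) := by
      intro b
      induction b using DirectSum.induction_on with
      | zero => simp [lin_map_zero J hJlin]
      | of y g' =>
        rw [hΨ, DirectSum.toAddMonoid_of]
        simp only [AddMonoidHom.comp_apply, mapHom_apply]
        rw [starOut_of, starOut_of]
        have hcg := Functor.congr_hom hcomm g'
        simp only [Functor.comp_map] at hcg
        simp [hcg, eqToHom_map]
      | add b1 b2 ih1 ih2 =>
        rw [map_add, map_add, ih1, ih2, map_add, hJlin.1]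
        simp [Preadditive.add_comp, Preadditive.comp_add]
    have hGv : starOutHom k G hGlin (H.obj x) (G.obj d') (Ψ a)
        = starOutHom k G hGlin (H.obj x) (G.obj d')
          (DirectSum.of (fun e : {e : D // G.obj e = G.obj d'} => (H.obj x ⟶ e.1))
            ⟨d', rfl⟩ (eqToHom hx ≫ g)) := by
      rw [key a, ha, starOut_of, hu]
      simp [eqToHom_map, retract_map_conj hJ2 (G.map g)]
    have hΨa := (hGout (H.obj x) (G.obj d')).1 hGv
    have hvne : eqToHom hx ≫ g ≠ 0 := by
      intro h0
      apply hg
      have hgg : g = eqToHom hx.symm ≫ (eqToHom hx ≫ g) := by simp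
      rw [hgg, h0]
      simp
    by_contra hno
    push_neg at hno
    have hzero : ∀ b : DirectSum {y : C // F.obj y = G.obj d'} (fun y => (x ⟶ y.1)),
        (Ψ b) (⟨d', rfl⟩ : {e : D // G.obj e = G.obj d'}) = 0 := by
      intro b
      induction b using DirectSum.induction_on with
      | zero => simp [DirectSum.zero_apply]
      | of y g' =>
        rw [hΨ, DirectSum.toAddMonoid_of]
        simp only [AddMonoidHom.comp_apply]
        apply DirectSum.of_eq_of_ne
        intro hq
        exact hno y.1 (congrArg Subtype.val hq).symm
      | add b1 b2 ih1 ih2 =>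
        rw [map_add, DirectSum.add_apply, ih1, ih2, add_zero]
    have hz := hzero a
    rw [hΨa, DirectSum.of_eq_same] at hz
    exact hvne hz
  -- backward propagation
  have step_in : ∀ (d d' : D) (g : d' ⟶ d), g ≠ 0 →
      (∃ x, H.obj x = d) → (∃ x, H.obj x = d') := by
    rintro d d' g hg ⟨x, hx⟩
    have hGd : G.obj d = F.obj x := (congrArg G.obj hx).symm.trans (hGH x)
    have hA : G.obj d' = Jinv.obj (G.obj d') := (hJinvid _).symm
    have hB : Jinv.obj (G.obj d) = F.obj x := (hJinvid _).trans hGd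
    set u : G.obj d' ⟶ F.obj x := eqToHom hA ≫ Jinv.map (G.map g) ≫ eqToHom hB with hu
    have hune : u ≠ 0 := by
      intro h0
      apply hg
      apply cov_map_injective hGlin hGout (f := g) (g := 0)
      rw [lin_map_zero G hGlin]
      apply retract_map_injective hJ2
      rw [lin_map_zero Jinv hJinvlin]
      have hj : Jinv.map (G.map g) = eqToHom hA.symm ≫ u ≫ eqToHom hB.symm := by
        rw [hu]; simp
      rw [hj, h0]
      simp
    obtain ⟨a, ha⟩ := (hFin x (G.obj d')).2 u
    set Ψ : (DirectSum {y : C // F.obj y = G.obj d'} (fun y => (y.1 ⟶ x))) →+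
        (DirectSum {e : D // G.obj e = G.obj d'} (fun e => (e.1 ⟶ H.obj x))) :=
      DirectSum.toAddMonoid (fun y =>
        (DirectSum.of (fun e : {e : D // G.obj e = G.obj d'} => (e.1 ⟶ H.obj x))
            ⟨H.obj y.1, (hGH y.1).trans y.2⟩).comp (mapHom H hHlin y.1 x)) with hΨ
    have key : ∀ b : DirectSum {y : C // F.obj y = G.obj d'} (fun y => (y.1 ⟶ x)),
        starInHom k G hGlin (H.obj x) (G.obj d') (Ψ b)
          = eqToHom (hJid (G.obj d')).symm ≫ J.map (starInHom k F hFlin x (G.obj d') b) ≫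
              eqToHom (Functor.congr_obj hcomm x).symm := by
      intro b
      induction b using DirectSum.induction_on with
      | zero => simp [lin_map_zero J hJlin]
      | of y g' =>
        rw [hΨ, DirectSum.toAddMonoid_of]
        simp only [AddMonoidHom.comp_apply, mapHom_apply]
        rw [starIn_of, starIn_of]
        have hcg := Functor.congr_hom hcomm g'
        simp only [Functor.comp_map] at hcg
        simp [hcg, eqToHom_map]
      | add b1 b2 ih1 ih2 =>
        rw [map_add, map_add, ih1, ih2, map_add, hJlin.1]
        simp [Preadditive.add_comp, Preadditive.comp_add]
    have hGv : starInHom k G hGlin (H.obj x) (G.obj d') (Ψ a)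
        = starInHom k G hGlin (H.obj x) (G.obj d')
          (DirectSum.of (fun e : {e : D // G.obj e = G.obj d'} => (e.1 ⟶ H.obj x))
            ⟨d', rfl⟩ (g ≫ eqToHom hx.symm)) := by
      rw [key a, ha, starIn_of, hu]
      simp [eqToHom_map, retract_map_conj hJ2 (G.map g)]
    have hΨa := (hGin (H.obj x) (G.obj d')).1 hGv
    have hvne : g ≫ eqToHom hx.symm ≠ 0 := by
      intro h0
      apply hg
      have hgg : g = (g ≫ eqToHom hx.symm) ≫ eqToHom hx := by simp
      rw [hgg, h0]
      simp
    by_contra hno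
    push_neg at hno
    have hzero : ∀ b : DirectSum {y : C // F.obj y = G.obj d'} (fun y => (y.1 ⟶ x)),
        (Ψ b) (⟨d', rfl⟩ : {e : D // G.obj e = G.obj d'}) = 0 := by
      intro b
      induction b using DirectSum.induction_on with
      | zero => simp [DirectSum.zero_apply]
      | of y g' =>
        rw [hΨ, DirectSum.toAddMonoid_of]
        simp only [AddMonoidHom.comp_apply]
        apply DirectSum.of_eq_of_ne
        intro hq
        exact hno y.1 (congrArg Subtype.val hq).symm
      | add b1 b2 ih1 ih2 =>
        rw [map_add, DirectSum.add_apply, ih1, ih2, add_zero]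
    have hz := hzero a
    rw [hΨa, DirectSum.of_eq_same] at hz
    exact hvne hz
  -- conclude by connectedness of D
  intro d
  obtain ⟨x, hx⟩ := hFsurj (G.obj d)
  have hstart : G.obj (H.obj x) = G.obj d := (hGH x).trans hx
  have himg : ∀ d1 d2 : D, Relation.EqvGen (fun p q : D => ∃ f : p ⟶ q, f ≠ 0) d1 d2 →
      ((∃ y, H.obj y = d1) ↔ (∃ y, H.obj y = d2)) := by
    intro d1 d2 h
    induction h with
    | rel p q hpq =>
      obtain ⟨f, hf⟩ := hpq
      exact ⟨step_out p q f hf, step_in q p f hf⟩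
    | refl p => exact Iff.rfl
    | symm p q _ ih => exact ih.symm
    | trans p q r _ _ ih1 ih2 => exact ih1.trans ih2
  exact ⟨((himg (H.obj x) d (hDconn (H.obj x) d)).1 ⟨x, rfl⟩).choose,
    ((himg (H.obj x) d (hDconn (H.obj x) d)).1 ⟨x, rfl⟩).choose_spec⟩

end GaloisMain

namespace GaloisMain

set_option linter.unusedSectionVars false
set_option maxHeartbeats 1000000

open DirectSum GaloisProofHelpers
open scoped Classical

variable {k : Type w} [CommRing k]
variable {C : Type u} [Category.{v} C] [Preadditive C] [CategoryTheory.Linear k C]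
variable {B : Type u} [Category.{v} B] [Preadditive B] [CategoryTheory.Linear k B]
variable {D : Type u} [Category.{v} D] [Preadditive D] [CategoryTheory.Linear k D]
variable {F : C ⥤ B} {G : D ⥤ B} {H : C ⥤ D} {J Jinv : B ⥤ B}

lemma H_starOut_bij
    (hcomm : H ⋙ G = F ⋙ J) (hJid : ∀ b, J.obj b = b)
    (hJ1 : J ⋙ Jinv = 𝟭 B) (hJ2 : Jinv ⋙ J = 𝟭 B) (hJlin : IsLinearFunctor k J)
    (hHlin : IsLinearFunctor k H)
    (hFcov : IsCovering k F) (hGcov : IsCovering k G) :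
    ∀ (x : C) (d : D), Function.Bijective (starOutHom k H hHlin x d) := by
  classical
  obtain ⟨hFlin, hFsurj, hFout, hFin⟩ := hFcov
  obtain ⟨hGlin, hGsurj, hGout, hGin⟩ := hGcov
  have hGH : ∀ x : C, G.obj (H.obj x) = F.obj x :=
    fun x => (Functor.congr_obj hcomm x).trans (hJid _)
  have hJinvid : ∀ b, Jinv.obj b = b := by
    intro b
    have h := Functor.congr_obj hJ1 b
    simp only [Functor.comp_obj, Functor.id_obj] at h
    rw [hJid] at h
    exact h
  have hJinvlin : IsLinearFunctor k Jinv := inv_isLinear hJ1 hJ2 hJlin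
  intro x d
  have toF : ∀ y' : {y : C // H.obj y = d}, F.obj y'.1 = G.obj d :=
    fun y' => (hGH y'.1).symm.trans (congrArg G.obj y'.2)
  have toG : ∀ y : {y : C // F.obj y = G.obj d}, G.obj (H.obj y.1) = G.obj d :=
    fun y => (hGH y.1).trans y.2
  set ι : (DirectSum {y : C // H.obj y = d} (fun y' => (x ⟶ y'.1))) →+
      (DirectSum {y : C // F.obj y = G.obj d} (fun y => (x ⟶ y.1))) :=
    DirectSum.toAddMonoid (fun y' =>
      DirectSum.of (fun y : {y : C // F.obj y = G.obj d} => (x ⟶ y.1)) ⟨y'.1, toF y'⟩) with hι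
  set π : (DirectSum {y : C // F.obj y = G.obj d} (fun y => (x ⟶ y.1))) →+
      (DirectSum {y : C // H.obj y = d} (fun y' => (x ⟶ y'.1))) :=
    DirectSum.toAddMonoid (fun y =>
      if h : H.obj y.1 = d then
        DirectSum.of (fun y' : {y : C // H.obj y = d} => (x ⟶ y'.1)) ⟨y.1, h⟩
      else 0) with hπ
  set ρ : (DirectSum {y : C // F.obj y = G.obj d} (fun y => (x ⟶ y.1))) →+
      (DirectSum {e : D // G.obj e = G.obj d} (fun e => (H.obj x ⟶ e.1))) :=
    DirectSum.toAddMonoid (fun y =>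
      (DirectSum.of (fun e : {e : D // G.obj e = G.obj d} => (H.obj x ⟶ e.1))
          ⟨H.obj y.1, toG y⟩).comp (mapHom H hHlin x y.1)) with hρ
  have picomp : ∀ A, π (ι A) = A := by
    intro A
    induction A using DirectSum.induction_on with
    | zero => simp
    | of y' f =>
      rw [hι, DirectSum.toAddMonoid_of, hπ, DirectSum.toAddMonoid_of]
      rw [dif_pos y'.2]
    | add A1 A2 ih1 ih2 => rw [map_add, map_add, ih1, ih2]
  have key5 : ∀ A, G.map (starOutHom k H hHlin x d A)
      = eqToHom (Functor.congr_obj hcomm x) ≫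
          J.map (starOutHom k F hFlin x (G.obj d) (ι A)) ≫ eqToHom (hJid (G.obj d)) := by
    intro A
    induction A using DirectSum.induction_on with
    | zero => simp [lin_map_zero G hGlin, lin_map_zero J hJlin]
    | of y' f =>
      rw [hι, DirectSum.toAddMonoid_of, starOut_of, starOut_of]
      have hcg := Functor.congr_hom hcomm f
      simp only [Functor.comp_map] at hcg
      simp [hcg, eqToHom_map]
    | add A1 A2 ih1 ih2 =>
      rw [map_add, hGlin.1, ih1, ih2, map_add, map_add, hJlin.1]
      simp [Preadditive.add_comp, Preadditive.comp_add]
  have keyρ : ∀ b, starOutHom k G hGlin (H.obj x) (G.obj d) (ρ b)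
      = eqToHom (Functor.congr_obj hcomm x) ≫
          J.map (starOutHom k F hFlin x (G.obj d) b) ≫ eqToHom (hJid (G.obj d)) := by
    intro b
    induction b using DirectSum.induction_on with
    | zero => simp [lin_map_zero J hJlin]
    | of y g' =>
      rw [hρ, DirectSum.toAddMonoid_of]
      simp only [AddMonoidHom.comp_apply, mapHom_apply]
      rw [starOut_of, starOut_of]
      have hcg := Functor.congr_hom hcomm g'
      simp only [Functor.comp_map] at hcg
      simp [hcg, eqToHom_map]
    | add b1 b2 ih1 ih2 =>
      rw [map_add, map_add, ih1, ih2, map_add, hJlin.1]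
      simp [Preadditive.add_comp, Preadditive.comp_add]
  have keyE2 : ∀ b, (ρ b) (⟨d, rfl⟩ : {e : D // G.obj e = G.obj d})
      = starOutHom k H hHlin x d (π b) := by
    intro b
    induction b using DirectSum.induction_on with
    | zero => simp [DirectSum.zero_apply]
    | of y f =>
      obtain ⟨yv, hy⟩ := y
      rw [hρ, DirectSum.toAddMonoid_of, hπ, DirectSum.toAddMonoid_of]
      simp only [AddMonoidHom.comp_apply, mapHom_apply]
      by_cases h : H.obj yv = d
      · subst h
        rw [dif_pos rfl, starOut_of, DirectSum.of_eq_same]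
        simp
      · rw [dif_neg h, DirectSum.of_eq_of_ne]
        · simp
        · intro hq
          exact h (congrArg Subtype.val hq).symm
    | add b1 b2 ih1 ih2 =>
      rw [map_add, DirectSum.add_apply, ih1, ih2, map_add, map_add]
  constructor
  · rw [injective_iff_map_eq_zero]
    intro A hA0
    have h2 : J.map (starOutHom k F hFlin x (G.obj d) (ι A)) = 0 := by
      apply conj_inj (Functor.congr_obj hcomm x) (hJid (G.obj d))
      rw [← key5 A, hA0, lin_map_zero G hGlin]
      simp
    have h3 : starOutHom k F hFlin x (G.obj d) (ι A) = 0 := by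
      apply retract_map_injective hJ1
      rw [h2, lin_map_zero J hJlin]
    have h4 : ι A = 0 := by
      apply (hFout x (G.obj d)).1
      rw [h3, map_zero]
    have := picomp A
    rw [h4, map_zero] at this
    exact this.symm
  · intro v
    have hA : F.obj x = Jinv.obj (G.obj (H.obj x)) := ((hJinvid _).trans (hGH x)).symm
    have hB : Jinv.obj (G.obj d) = G.obj d := hJinvid _
    set u : F.obj x ⟶ G.obj d := eqToHom hA ≫ Jinv.map (G.map v) ≫ eqToHom hB with hu
    obtain ⟨a, ha⟩ := (hFout x (G.obj d)).2 u
    have hρv : starOutHom k G hGlin (H.obj x) (G.obj d) (ρ a)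
        = starOutHom k G hGlin (H.obj x) (G.obj d)
          (DirectSum.of (fun e : {e : D // G.obj e = G.obj d} => (H.obj x ⟶ e.1))
            ⟨d, rfl⟩ v) := by
      rw [keyρ a, ha, starOut_of, hu]
      simp [eqToHom_map, retract_map_conj hJ2 (G.map v)]
    have hρa := (hGout (H.obj x) (G.obj d)).1 hρv
    refine ⟨π a, ?_⟩
    rw [← keyE2 a, hρa, DirectSum.of_eq_same]

end GaloisMain

namespace GaloisMain

set_option linter.unusedSectionVars false
set_option maxHeartbeats 1000000

open DirectSum GaloisProofHelpers
open scoped Classical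

variable {k : Type w} [CommRing k]
variable {C : Type u} [Category.{v} C] [Preadditive C] [CategoryTheory.Linear k C]
variable {B : Type u} [Category.{v} B] [Preadditive B] [CategoryTheory.Linear k B]
variable {D : Type u} [Category.{v} D] [Preadditive D] [CategoryTheory.Linear k D]
variable {F : C ⥤ B} {G : D ⥤ B} {H : C ⥤ D} {J Jinv : B ⥤ B}

lemma H_starIn_bij
    (hcomm : H ⋙ G = F ⋙ J) (hJid : ∀ b, J.obj b = b)
    (hJ1 : J ⋙ Jinv = 𝟭 B) (hJ2 : Jinv ⋙ J = 𝟭 B) (hJlin : IsLinearFunctor k J)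
    (hHlin : IsLinearFunctor k H)
    (hFcov : IsCovering k F) (hGcov : IsCovering k G) :
    ∀ (x : C) (d : D), Function.Bijective (starInHom k H hHlin x d) := by
  classical
  obtain ⟨hFlin, hFsurj, hFout, hFin⟩ := hFcov
  obtain ⟨hGlin, hGsurj, hGout, hGin⟩ := hGcov
  have hGH : ∀ x : C, G.obj (H.obj x) = F.obj x :=
    fun x => (Functor.congr_obj hcomm x).trans (hJid _)
  have hJinvid : ∀ b, Jinv.obj b = b := by
    intro b
    have h := Functor.congr_obj hJ1 b
    simp only [Functor.comp_obj, Functor.id_obj] at h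
    rw [hJid] at h
    exact h
  have hJinvlin : IsLinearFunctor k Jinv := inv_isLinear hJ1 hJ2 hJlin
  intro x d
  have toF : ∀ y' : {y : C // H.obj y = d}, F.obj y'.1 = G.obj d :=
    fun y' => (hGH y'.1).symm.trans (congrArg G.obj y'.2)
  have toG : ∀ y : {y : C // F.obj y = G.obj d}, G.obj (H.obj y.1) = G.obj d :=
    fun y => (hGH y.1).trans y.2
  set ι : (DirectSum {y : C // H.obj y = d} (fun y' => (y'.1 ⟶ x))) →+
      (DirectSum {y : C // F.obj y = G.obj d} (fun y => (y.1 ⟶ x))) :=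
    DirectSum.toAddMonoid (fun y' =>
      DirectSum.of (fun y : {y : C // F.obj y = G.obj d} => (y.1 ⟶ x)) ⟨y'.1, toF y'⟩) with hι
  set π : (DirectSum {y : C // F.obj y = G.obj d} (fun y => (y.1 ⟶ x))) →+
      (DirectSum {y : C // H.obj y = d} (fun y' => (y'.1 ⟶ x))) :=
    DirectSum.toAddMonoid (fun y =>
      if h : H.obj y.1 = d then
        DirectSum.of (fun y' : {y : C // H.obj y = d} => (y'.1 ⟶ x)) ⟨y.1, h⟩
      else 0) with hπ
  set ρ : (DirectSum {y : C // F.obj y = G.obj d} (fun y => (y.1 ⟶ x))) →+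
      (DirectSum {e : D // G.obj e = G.obj d} (fun e => (e.1 ⟶ H.obj x))) :=
    DirectSum.toAddMonoid (fun y =>
      (DirectSum.of (fun e : {e : D // G.obj e = G.obj d} => (e.1 ⟶ H.obj x))
          ⟨H.obj y.1, toG y⟩).comp (mapHom H hHlin y.1 x)) with hρ
  have picomp : ∀ A, π (ι A) = A := by
    intro A
    induction A using DirectSum.induction_on with
    | zero => simp
    | of y' f =>
      rw [hι, DirectSum.toAddMonoid_of, hπ, DirectSum.toAddMonoid_of]
      rw [dif_pos y'.2]
    | add A1 A2 ih1 ih2 => rw [map_add, map_add, ih1, ih2]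
  have key5 : ∀ A, G.map (starInHom k H hHlin x d A)
      = eqToHom (hJid (G.obj d)).symm ≫
          J.map (starInHom k F hFlin x (G.obj d) (ι A)) ≫
          eqToHom (Functor.congr_obj hcomm x).symm := by
    intro A
    induction A using DirectSum.induction_on with
    | zero => simp [lin_map_zero G hGlin, lin_map_zero J hJlin]
    | of y' f =>
      rw [hι, DirectSum.toAddMonoid_of, starIn_of, starIn_of]
      have hcg := Functor.congr_hom hcomm f
      simp only [Functor.comp_map] at hcg
      simp [hcg, eqToHom_map]
    | add A1 A2 ih1 ih2 =>
      rw [map_add, hGlin.1, ih1, ih2, map_add, map_add, hJlin.1]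
      simp [Preadditive.add_comp, Preadditive.comp_add]
  have keyρ : ∀ b, starInHom k G hGlin (H.obj x) (G.obj d) (ρ b)
      = eqToHom (hJid (G.obj d)).symm ≫
          J.map (starInHom k F hFlin x (G.obj d) b) ≫
          eqToHom (Functor.congr_obj hcomm x).symm := by
    intro b
    induction b using DirectSum.induction_on with
    | zero => simp [lin_map_zero J hJlin]
    | of y g' =>
      rw [hρ, DirectSum.toAddMonoid_of]
      simp only [AddMonoidHom.comp_apply, mapHom_apply]
      rw [starIn_of, starIn_of]
      have hcg := Functor.congr_hom hcomm g'
      simp only [Functor.comp_map] at hcg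
      simp [hcg, eqToHom_map]
    | add b1 b2 ih1 ih2 =>
      rw [map_add, map_add, ih1, ih2, map_add, hJlin.1]
      simp [Preadditive.add_comp, Preadditive.comp_add]
  have keyE2 : ∀ b, (ρ b) (⟨d, rfl⟩ : {e : D // G.obj e = G.obj d})
      = starInHom k H hHlin x d (π b) := by
    intro b
    induction b using DirectSum.induction_on with
    | zero => simp [DirectSum.zero_apply]
    | of y f =>
      obtain ⟨yv, hy⟩ := y
      rw [hρ, DirectSum.toAddMonoid_of, hπ, DirectSum.toAddMonoid_of]
      simp only [AddMonoidHom.comp_apply, mapHom_apply]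
      by_cases h : H.obj yv = d
      · subst h
        rw [dif_pos rfl, starIn_of, DirectSum.of_eq_same]
        simp
      · rw [dif_neg h, DirectSum.of_eq_of_ne]
        · simp
        · intro hq
          exact h (congrArg Subtype.val hq).symm
    | add b1 b2 ih1 ih2 =>
      rw [map_add, DirectSum.add_apply, ih1, ih2, map_add, map_add]
  constructor
  · rw [injective_iff_map_eq_zero]
    intro A hA0
    have h2 : J.map (starInHom k F hFlin x (G.obj d) (ι A)) = 0 := by
      apply conj_inj (hJid (G.obj d)).symm (Functor.congr_obj hcomm x).symm
      rw [← key5 A, hA0, lin_map_zero G hGlin]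
      simp
    have h3 : starInHom k F hFlin x (G.obj d) (ι A) = 0 := by
      apply retract_map_injective hJ1
      rw [h2, lin_map_zero J hJlin]
    have h4 : ι A = 0 := by
      apply (hFin x (G.obj d)).1
      rw [h3, map_zero]
    have := picomp A
    rw [h4, map_zero] at this
    exact this.symm
  · intro v
    have hA : Jinv.obj (G.obj (H.obj x)) = F.obj x := (hJinvid _).trans (hGH x)
    have hB : G.obj d = Jinv.obj (G.obj d) := (hJinvid _).symm
    set u : G.obj d ⟶ F.obj x := eqToHom hB ≫ Jinv.map (G.map v) ≫ eqToHom hA with hu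
    obtain ⟨a, ha⟩ := (hFin x (G.obj d)).2 u
    have hρv : starInHom k G hGlin (H.obj x) (G.obj d) (ρ a)
        = starInHom k G hGlin (H.obj x) (G.obj d)
          (DirectSum.of (fun e : {e : D // G.obj e = G.obj d} => (e.1 ⟶ H.obj x))
            ⟨d, rfl⟩ v) := by
      rw [keyρ a, ha, starIn_of, hu]
      simp [eqToHom_map, retract_map_conj hJ2 (G.map v)]
    have hρa := (hGin (H.obj x) (G.obj d)).1 hρv
    refine ⟨π a, ?_⟩
    rw [← keyE2 a, hρa, DirectSum.of_eq_same]

end GaloisMain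

namespace GaloisMain

set_option linter.unusedSectionVars false
set_option maxHeartbeats 1000000

open DirectSum GaloisProofHelpers
open scoped Classical

variable {k : Type w} [CommRing k]
variable {C : Type u} [Category.{v} C] [Preadditive C] [CategoryTheory.Linear k C]
variable {B : Type u} [Category.{v} B] [Preadditive B] [CategoryTheory.Linear k B]
variable {D : Type u} [Category.{v} D] [Preadditive D] [CategoryTheory.Linear k D]
variable {F : C ⥤ B} {G : D ⥤ B} {H : C ⥤ D} {J Jinv : B ⥤ B}

lemma sigma_comp_H
    (hcomm : H ⋙ G = F ⋙ J) (hJid : ∀ b, J.obj b = b)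
    (hJ1 : J ⋙ Jinv = 𝟭 B) (hJ2 : Jinv ⋙ J = 𝟭 B) (hJlin : IsLinearFunctor k J)
    (hHlin : IsLinearFunctor k H)
    (hFcov : IsCovering k F) (hGcov : IsCovering k G) (hCconn : IsConnectedKCat C)
    {σ : C ⥤ C} (hσF : σ ⋙ F = F)
    {x₀ : C} (hfix : H.obj (σ.obj x₀) = H.obj x₀) : σ ⋙ H = H := by
  classical
  obtain ⟨hFlin, hFsurj, hFout, hFin⟩ := hFcov
  obtain ⟨hGlin, hGsurj, hGout, hGin⟩ := hGcov
  have hGH : ∀ x : C, G.obj (H.obj x) = F.obj x :=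
    fun x => (Functor.congr_obj hcomm x).trans (hJid _)
  have hGHσobj : ∀ z : C, G.obj (H.obj (σ.obj z)) = G.obj (H.obj z) := by
    intro z
    rw [hGH z, hGH (σ.obj z)]
    exact Functor.congr_obj hσF z
  have hGHσ : ∀ {a b : C} (f : a ⟶ b),
      G.map (H.map (σ.map f)) =
        eqToHom (hGHσobj a) ≫ G.map (H.map f) ≫ eqToHom (hGHσobj b).symm := by
    intro a b f
    have h1 := Functor.congr_hom hcomm (σ.map f)
    have h2 := Functor.congr_hom hσF f
    have h3 := Functor.congr_hom hcomm f
    simp only [Functor.comp_map] at h1 h2 h3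
    rw [h1, h2, h3]
    simp [eqToHom_map]
  have hHne : ∀ {a b : C} (f : a ⟶ b), f ≠ 0 → H.map f ≠ 0 := by
    intro a b f hf h0
    apply hf
    apply cov_map_injective hFlin hFout (f := f) (g := 0)
    rw [lin_map_zero F hFlin]
    apply retract_map_injective hJ1
    rw [lin_map_zero J hJlin]
    have hcg := Functor.congr_hom hcomm f
    simp only [Functor.comp_map] at hcg
    apply conj_inj (Functor.congr_obj hcomm a) ((Functor.congr_obj hcomm b).symm)
    rw [← hcg, h0, lin_map_zero G hGlin]
    simp
  have step_out : ∀ {a b : C} (f : a ⟶ b), f ≠ 0 →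
      H.obj (σ.obj a) = H.obj a → H.obj (σ.obj b) = H.obj b := by
    intro a b f hf ea
    have hAB : starOutHom k G hGlin (H.obj a) (G.obj (H.obj b))
          (DirectSum.of (fun e : {e : D // G.obj e = G.obj (H.obj b)} =>
              (H.obj a ⟶ e.1)) ⟨H.obj (σ.obj b), hGHσobj b⟩
            (eqToHom ea.symm ≫ H.map (σ.map f)))
        = starOutHom k G hGlin (H.obj a) (G.obj (H.obj b))
          (DirectSum.of (fun e : {e : D // G.obj e = G.obj (H.obj b)} =>
              (H.obj a ⟶ e.1)) ⟨H.obj b, rfl⟩ (H.map f)) := by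
      rw [starOut_of, starOut_of]
      simp [hGHσ f, eqToHom_map]
    have heq := (hGout (H.obj a) (G.obj (H.obj b))).1 hAB
    by_contra hne
    have h0 := DFunLike.congr_fun heq
      (⟨H.obj b, rfl⟩ : {e : D // G.obj e = G.obj (H.obj b)})
    rw [DirectSum.of_eq_of_ne _ _ _ (fun hq => hne (congrArg Subtype.val hq).symm),
      DirectSum.of_eq_same] at h0
    exact hHne f hf h0.symm
  have step_in : ∀ {a b : C} (f : b ⟶ a), f ≠ 0 →
      H.obj (σ.obj a) = H.obj a → H.obj (σ.obj b) = H.obj b := by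
    intro a b f hf ea
    have hAB : starInHom k G hGlin (H.obj a) (G.obj (H.obj b))
          (DirectSum.of (fun e : {e : D // G.obj e = G.obj (H.obj b)} =>
              (e.1 ⟶ H.obj a)) ⟨H.obj (σ.obj b), hGHσobj b⟩
            (H.map (σ.map f) ≫ eqToHom ea))
        = starInHom k G hGlin (H.obj a) (G.obj (H.obj b))
          (DirectSum.of (fun e : {e : D // G.obj e = G.obj (H.obj b)} =>
              (e.1 ⟶ H.obj a)) ⟨H.obj b, rfl⟩ (H.map f)) := by
      rw [starIn_of, starIn_of]
      simp [hGHσ f, eqToHom_map]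
    have heq := (hGin (H.obj a) (G.obj (H.obj b))).1 hAB
    by_contra hne
    have h0 := DFunLike.congr_fun heq
      (⟨H.obj b, rfl⟩ : {e : D // G.obj e = G.obj (H.obj b)})
    rw [DirectSum.of_eq_of_ne _ _ _ (fun hq => hne (congrArg Subtype.val hq).symm),
      DirectSum.of_eq_same] at h0
    exact hHne f hf h0.symm
  have objeq : ∀ z : C, H.obj (σ.obj z) = H.obj z := by
    have hiff : ∀ a b : C, Relation.EqvGen (fun p q : C => ∃ f : p ⟶ q, f ≠ 0) a b →
        ((H.obj (σ.obj a) = H.obj a) ↔ (H.obj (σ.obj b) = H.obj b)) := by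
      intro a b h
      induction h with
      | rel p q hpq =>
        obtain ⟨f, hf⟩ := hpq
        exact ⟨step_out f hf, step_in f hf⟩
      | refl p => exact Iff.rfl
      | symm p q _ ih => exact ih.symm
      | trans p q r _ _ ih1 ih2 => exact ih1.trans ih2
    intro z
    exact (hiff x₀ z (hCconn x₀ z)).1 hfix
  have mapeq : ∀ (a b : C) (f : a ⟶ b),
      H.map (σ.map f) = eqToHom (objeq a) ≫ H.map f ≫ eqToHom (objeq b).symm := by
    intro a b f
    apply cov_map_injective hGlin hGout
    rw [hGHσ f]
    simp [eqToHom_map]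
  exact CategoryTheory.Functor.ext objeq (fun a b f => mapeq a b f)

end GaloisMain
theorem galois_morphism_is_galois_covering (k : Type w) [CommRing k]
    {C : Type u} [Category.{v} C] [Preadditive C] [CategoryTheory.Linear k C]
    {B : Type u} [Category.{v} B] [Preadditive B] [CategoryTheory.Linear k B]
    {D : Type u} [Category.{v} D] [Preadditive D] [CategoryTheory.Linear k D]
    (F : C ⥤ B) (G : D ⥤ B) (hF : IsGaloisCovering k F) (hG : IsGaloisCovering k G)
    (H : C ⥤ D) (J : B ⥤ B) (hHJ : IsCoveringMorphism k F G H J) :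
    IsGaloisCovering k H := by
  obtain ⟨hHlin, hJlin, ⟨Jinv, hJ1, hJ2⟩, hJid, hcomm⟩ := hHJ
  have hFcov := hF.1
  have hGcov := hG.1
  have hCconn := hF.2.1
  have hDconn := hG.2.1
  refine ⟨⟨hHlin,
    GaloisMain.H_obj_surjective hcomm hJid hJ1 hJ2 hJlin hHlin hFcov hGcov hDconn,
    GaloisMain.H_starOut_bij hcomm hJid hJ1 hJ2 hJlin hHlin hFcov hGcov,
    GaloisMain.H_starIn_bij hcomm hJid hJ1 hJ2 hJlin hHlin hFcov hGcov⟩, hCconn, ?_⟩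
  obtain ⟨b₀, htrans⟩ := hG.2.2
  obtain ⟨hGlin, hGsurj, hGout, hGin⟩ := hGcov
  obtain ⟨d₀, hd₀⟩ := hGsurj b₀
  refine ⟨d₀, ?_⟩
  intro x y hx hy
  have hGHx : G.obj (H.obj x) = F.obj x := (Functor.congr_obj hcomm x).trans (hJid _)
  have hGHy : G.obj (H.obj y) = F.obj y := (Functor.congr_obj hcomm y).trans (hJid _)
  have hxy : F.obj x = F.obj y := by rw [← hGHx, ← hGHy, hx, hy]
  obtain ⟨σ, hmem, hσx⟩ := GaloisProofHelpers.galois_transitive hF hxy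
  have hfix : H.obj (σ.obj x) = H.obj x := by rw [hσx, hx, hy]
  exact ⟨σ, ⟨hmem.1, hmem.2.1,
    GaloisMain.sigma_comp_H hcomm hJid hJ1 hJ2 hJlin hHlin hF.1
      ⟨hGlin, hGsurj, hGout, hGin⟩ hCconn hmem.2.2 hfix⟩, hσx⟩
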